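/- In any metabelian Novikov algebra A, for all a,b,c,d,e in A, the element (a*(b*(c*d)))*e equals 0. -/
import Mathlib


/-- Setting: a nonassociative (nonunital) algebra over a field of characteristic 0. -/
theorem stmt_6 {K : Type*} [Field K] [CharZero K]
    {A : Type*} [NonUnitalNonAssocRing A] [Module K A]
    [SMulCommClass K A A] [IsScalarTower K A A]
    (lcom : ∀ a b c : A, a*(b*c) = b*(a*c))
    (rsym : ∀ a b c : A, (a*b)*c - a*(b*c) = (a*c)*b - a*(c*b))
    (metab : ∀ a b c d : A, (a*b)*(c*d) = 0) :
    ∀ a b c d e : A, (a*(b*(c*d)))*e = 0 := by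
  -- R2 : anything times ((p*q)*r) vanishes
  have R2 : ∀ y p q r : A, y*((p*q)*r) = 0 := by
    intro y p q r
    rw [← lcom (p*q) y r, metab p q y r]
  -- symmetry of the innermost product under one left multiplication
  have S1 : ∀ b c d e : A, b*(c*(d*e)) = b*(c*(e*d)) := by
    intro b c d e
    have h := congrArg (fun x => b * x) (rsym c d e)
    simp only [mul_sub] at h
    rw [R2 b c d e, R2 b c e d] at h
    simpa using h
  -- key degree-4 identity
  have key : ∀ b c d e : A, (b*(c*d))*e = -(b*(c*(d*e))) := by
    intro b c d e
    have h := rsym b (c*d) e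
    rw [R2 b c d e, metab b e c d, lcom e c d, ← S1 b c d e] at h
    simpa using h
  -- the strong lemma: three left multiplications of a product vanish under one more
  have T0 : ∀ a b c d e : A, a*(b*(c*(d*e))) = 0 := by
    intro a b c d e
    have h : b*(c*(d*e)) = -((b*(c*d))*e) := by rw [key b c d e, neg_neg]
    rw [h, mul_neg, R2 a b (c*d) e, neg_zero]
  intro a b c d e
  have h := rsym a (b*(c*d)) e
  rw [R2 a b (c*d) e, metab a e b (c*d), lcom e b (c*d), lcom e c d,
    T0 a b c e d] at h
  simpa using h
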